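/- For k ≥ 2, the polynomial x^k + x^{k−1} + ⋯ + x^2 + x − 1 is irreducible over ℚ. -/

import Mathlib

open Polynomial Finset

noncomputable def gZ (k : ℕ) : ℤ[X] := (∑ i ∈ Finset.Icc 1 k, X ^ i) - 1

lemma ring_id {R : Type*} [CommRing R] (k : ℕ) (x : R) :
    (x - 1) * ((∑ i ∈ Finset.Icc 1 k, x ^ i) - 1) = x ^ (k+1) - 2*x + 1 := by
  have h : (1:R) + (∑ i ∈ Finset.Icc 1 k, x ^ i) = (∑ i ∈ Finset.range (k+1), x ^ i) := by
    induction k with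
    | zero => simp
    | succ n ih =>
      rw [Finset.sum_Icc_succ_top (by omega), Finset.sum_range_succ, ← ih]
      ring
  have h2 : (x - 1) * (∑ i ∈ Finset.range (k+1), x ^ i) = x ^ (k+1) - 1 := by
    have := geom_sum_mul x (k+1)
    linear_combination this
  have h3 : (∑ i ∈ Finset.Icc 1 k, x ^ i) = (∑ i ∈ Finset.range (k+1), x ^ i) - 1 := by
    linear_combination h
  rw [h3]
  linear_combination h2

lemma kbound (k : ℕ) (hk : 2 ≤ k) : 16*(k+1)*3^k ≤ 27*4^k := by
  induction k with
  | zero => omega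
  | succ n ih =>
    rcases Nat.lt_or_ge n 2 with h | h
    · interval_cases n <;> norm_num
    · have := ih h
      calc 16*(n+1+1)*3^(n+1) = 3*16*(n+2)*3^n := by ring
        _ ≤ 4*16*(n+1)*3^n := by nlinarith [pow_pos (show 0<3 by norm_num) n]
        _ ≤ 4*(27*4^n) := by nlinarith
        _ = 27*4^(n+1) := by ring

-- D

lemma beta_pow_bound (k : ℕ) (hk : 2 ≤ k) {β : ℝ} (h1 : 1/2 < β) (h2 : β < 3/4) :
    (k+1 : ℝ) * β ^ k < 2 := by
  have hb0 : (0:ℝ) ≤ β := by linarith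
  have hlt : β ^ k < (3/4 : ℝ) ^ k := by
    apply pow_lt_pow_left₀ h2 hb0 (by omega)
  have hcr : (16:ℝ)*(k+1)*3^k ≤ 27*4^k := by exact_mod_cast kbound k hk
  have h4 : (0:ℝ) < 4^k := by positivity
  have key : (k+1 : ℝ) * (3/4:ℝ)^k ≤ 27/16 := by
    rw [div_pow, ← mul_div_assoc, div_le_div_iff₀ h4 (by norm_num)]
    nlinarith
  nlinarith [mul_pos (show (0:ℝ) < (k+1:ℝ) by positivity) (pow_pos (show (0:ℝ)<β by linarith) k)]

lemma beta_exists (k : ℕ) (hk : 2 ≤ k) :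
    ∃ β : ℝ, 1/2 < β ∧ β < 3/4 ∧ β ^ (k+1) = 2*β - 1 := by
  set f : ℝ → ℝ := fun t => t ^ (k+1) - 2*t + 1 with hf
  have hcont : ContinuousOn f (Set.Icc (1/2 : ℝ) (3/4)) := by fun_prop
  have hb : f (3/4) < 0 := by
    have h1 : (3/4 : ℝ) ^ (k+1) ≤ (3/4) ^ 3 := by
      apply pow_le_pow_of_le_one (by norm_num) (by norm_num) (by omega)
    simp only [hf]
    nlinarith
  have ha : 0 < f (1/2) := by
    have : (0:ℝ) < (1/2 : ℝ) ^ (k+1) := by positivity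
    simp only [hf]; nlinarith
  have hsub := intermediate_value_Icc' (by norm_num : (1/2:ℝ) ≤ 3/4) hcont
  have h0 : (0:ℝ) ∈ Set.Icc (f (3/4)) (f (1/2)) := ⟨hb.le, ha.le⟩
  obtain ⟨β, hβmem, hβ⟩ := hsub h0
  refine ⟨β, ?_, ?_, ?_⟩
  · rcases lt_or_eq_of_le hβmem.1 with h | h
    · exact h
    · exfalso; rw [← h] at hβ; rw [hβ] at ha; exact lt_irrefl 0 ha
  · rcases lt_or_eq_of_le hβmem.2 with h | h
    · exact h
    · exfalso; rw [h] at hβ; rw [hβ] at hb; exact lt_irrefl 0 hb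
  · simp only [hf] at hβ; linarith

lemma root_in_disk (k : ℕ) (hk : 2 ≤ k) {β : ℝ} (hβ1 : 1/2 < β) (hβ2 : β < 3/4)
    (hβ : β ^ (k+1) = 2*β - 1) (w : ℂ) (hw : w ^ (k+1) = 2*w - 1)
    (hwn : ‖w‖ ≤ 1) (hw1 : w ≠ 1) : w = (β : ℂ) := by
  set r := ‖w‖ with hr
  have hr0 : 0 ≤ r := norm_nonneg w
  have key1 : r ^ (k+1) = ‖2*w - 1‖ := by rw [hr, ← norm_pow, hw]
  have key2 : 2*r - 1 ≤ ‖2*w - 1‖ := by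
    have h := norm_sub_norm_le (2*w) 1
    have h2 : ‖2*w‖ = 2*r := by
      rw [norm_mul]; simp [hr]
    rw [h2] at h
    simpa using h
  have hfr : 2*r - 1 ≤ r ^ (k+1) := by rw [key1]; exact key2
  -- rule out r = 1
  have hrne1 : r ≠ 1 := by
    intro h
    have h1 : ‖2*w - 1‖ = 1 := by rw [← key1, h, one_pow]
    have ha : w.re^2 + w.im^2 = 1 := by
      have : Complex.normSq w = 1 := by
        rw [Complex.normSq_eq_norm_sq, ← hr, h]; norm_num
      simpa [Complex.normSq_apply, sq] using this
    have hb : (2*w.re - 1)^2 + (2*w.im)^2 = 1 := by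
      have : Complex.normSq (2*w - 1) = 1 := by
        rw [Complex.normSq_eq_norm_sq, h1]; norm_num
      simpa [Complex.normSq_apply, sq] using this
    have hre : w.re = 1 := by nlinarith
    have him : w.im = 0 := by nlinarith
    exact hw1 (Complex.ext (by simp [hre]) (by simp [him]))
  -- r ≤ β
  have hrleβ : r ≤ β := by
    by_contra hgt
    push_neg at hgt
    have hrlt1 : r < 1 := lt_of_le_of_ne hwn hrne1
    set A := ∑ i ∈ Finset.range (k+1), r^i * β^(k+1-1-i) with hA
    set B := ∑ i ∈ Finset.range (k+1), r^i with hB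
    have idA : A * (r - β) = r^(k+1) - β^(k+1) := geom_sum₂_mul r β (k+1)
    have idB : B * (r - 1) = r^(k+1) - 1 := geom_sum_mul r (k+1)
    have hA2 : 2 ≤ A := by nlinarith [idA]
    have hB2 : B ≤ 2 := by nlinarith [idB]
    have hAB : A < B := by
      apply Finset.sum_lt_sum
      · intro i hi
        have h1 : β^(k+1-1-i) ≤ 1 :=
          pow_le_one₀ (by linarith) (by linarith)
        calc r^i * β^(k+1-1-i) ≤ r^i * 1 :=
              mul_le_mul_of_nonneg_left h1 (pow_nonneg hr0 i)
          _ = r^i := by ring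
      · refine ⟨0, Finset.mem_range.mpr (by omega), ?_⟩
        have : β^(k+1-1-0) < 1 := pow_lt_one₀ (by linarith) (by linarith) (by omega)
        simpa using this
    linarith
  -- contraction
  by_contra hne
  have hβC : ((β:ℂ)) ^ (k+1) = 2*(β:ℂ) - 1 := by
    exact_mod_cast congrArg (fun t : ℝ => (t : ℂ)) hβ
  set S := ∑ i ∈ Finset.range (k+1), w^i * ((β:ℂ))^(k+1-1-i) with hS
  have idS : S * (w - (β:ℂ)) = w^(k+1) - ((β:ℂ))^(k+1) := geom_sum₂_mul w (β:ℂ) (k+1)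
  have idS2 : S * (w - (β:ℂ)) = 2 * (w - (β:ℂ)) := by
    rw [idS, hw, hβC]; ring
  have hS2 : S = 2 := by
    have hwd : w - (β:ℂ) ≠ 0 := sub_ne_zero.mpr hne
    exact mul_right_cancel₀ hwd idS2
  have hnorm : ‖S‖ < 2 := by
    have hb : ‖S‖ ≤ ∑ i ∈ Finset.range (k+1), ‖w^i * ((β:ℂ))^(k+1-1-i)‖ :=
      norm_sum_le _ _
    have hterm : ∀ i ∈ Finset.range (k+1), ‖w^i * ((β:ℂ))^(k+1-1-i)‖ ≤ β^k := by
      intro i hi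
      have hik : i ≤ k := by simpa [Nat.lt_succ_iff] using hi
      have h1 : ‖w^i * ((β:ℂ))^(k+1-1-i)‖ = r^i * β^(k+1-1-i) := by
        rw [norm_mul, norm_pow, norm_pow, Complex.norm_real]
        rw [Real.norm_eq_abs, abs_of_pos (by linarith)]
      rw [h1]
      have h2 : r^i ≤ β^i := pow_le_pow_left₀ hr0 hrleβ i
      have h3 : β^i * β^(k+1-1-i) = β^k := by
        rw [← pow_add]; congr 1; omega
      have h4 : (0:ℝ) ≤ β^(k+1-1-i) := pow_nonneg (by linarith) _
      nlinarith
    have hsum : ∑ i ∈ Finset.range (k+1), ‖w^i * ((β:ℂ))^(k+1-1-i)‖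
        ≤ (k+1 : ℝ) * β^k := by
      calc _ ≤ ∑ _i ∈ Finset.range (k+1), β^k := Finset.sum_le_sum hterm
        _ = (k+1 : ℝ) * β^k := by
            rw [Finset.sum_const, Finset.card_range]; push_cast; ring
    have := beta_pow_bound k hk hβ1 hβ2
    linarith
  rw [hS2] at hnorm
  simp at hnorm

lemma gZ_coeff (k n : ℕ) :
    (gZ k).coeff n = (if n ∈ Finset.Icc 1 k then 1 else 0) - (if n = 0 then 1 else 0) := by
  simp only [gZ, coeff_sub, finset_sum_coeff, coeff_X_pow]
  congr 1
  · rw [Finset.sum_ite_eq (Finset.Icc 1 k) n (fun _ => (1:ℤ))]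
  · simp [Polynomial.coeff_one]

lemma gZ_coeff_zero (k : ℕ) (hk : 1 ≤ k) : (gZ k).coeff 0 = -1 := by
  rw [gZ_coeff]; simp

lemma gZ_coeff_k (k : ℕ) (hk : 1 ≤ k) : (gZ k).coeff k = 1 := by
  rw [gZ_coeff]; simp; omega

lemma gZ_natDegree_le (k : ℕ) : (gZ k).natDegree ≤ k := by
  unfold gZ
  apply le_trans (natDegree_sub_le _ _)
  simp only [natDegree_one, max_le_iff]
  constructor
  · apply natDegree_sum_le_of_forall_le
    intro i hi
    simp only [Finset.mem_Icc] at hi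
    exact le_trans (natDegree_X_pow_le i) hi.2
  · omega

lemma gZ_monic (k : ℕ) (hk : 1 ≤ k) : (gZ k).Monic :=
  monic_of_natDegree_le_of_coeff_eq_one k (gZ_natDegree_le k) (gZ_coeff_k k hk)

lemma gZ_natDegree (k : ℕ) (hk : 1 ≤ k) : (gZ k).natDegree = k :=
  le_antisymm (gZ_natDegree_le k) (le_natDegree_of_ne_zero (by rw [gZ_coeff_k k hk]; norm_num))

lemma gZ_map {R : Type*} [CommRing R] (k : ℕ) :
    (gZ k).map (Int.castRingHom R) = (∑ i ∈ Finset.Icc 1 k, (X:R[X]) ^ i) - 1 := by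
  simp [gZ, Polynomial.map_sub, Polynomial.map_sum, Polynomial.map_pow]

lemma gZ_eval_C (k : ℕ) (w : ℂ) :
    ((gZ k).map (Int.castRingHom ℂ)).eval w = (∑ i ∈ Finset.Icc 1 k, w ^ i) - 1 := by
  rw [gZ_map]
  simp [eval_finset_sum]

-- roots of gZ over ℂ satisfy the equation and are ≠ 1
lemma root_eqn (k : ℕ) (hk : 2 ≤ k) (w : ℂ)
    (hw : ((gZ k).map (Int.castRingHom ℂ)).eval w = 0) :
    w ^ (k+1) = 2*w - 1 ∧ w ≠ 1 := by
  rw [gZ_eval_C] at hw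
  constructor
  · have := ring_id k w
    rw [hw, mul_zero] at this
    linear_combination -this
  · rintro rfl
    simp only [one_pow, Finset.sum_const, Nat.card_Icc, smul_eq_mul, mul_one] at hw
    have h2 : ((k : ℂ)) - 1 = 0 := by
      simpa [Nat.add_sub_cancel] using hw
    have h3 : (k : ℂ) = 1 := by linear_combination h2
    have h4 : (k : ℕ) = 1 := by exact_mod_cast h3
    omega


lemma not_both (k : ℕ) (hk : 2 ≤ k) {β : ℝ} (hβ1 : 1/2 < β) (hβ2 : β < 3/4)
    (hβ : β ^ (k+1) = 2*β - 1) (p q : ℤ[X]) (hpq : gZ k = p * q)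
    (hP : (p.map (Int.castRingHom ℂ)).eval (β:ℂ) = 0)
    (hQ : (q.map (Int.castRingHom ℂ)).eval (β:ℂ) = 0) : False := by
  set P := p.map (Int.castRingHom ℂ)
  set Q := q.map (Int.castRingHom ℂ)
  have hdP : (X - C (β:ℂ)) ∣ P := dvd_iff_isRoot.mpr hP
  have hdQ : (X - C (β:ℂ)) ∣ Q := dvd_iff_isRoot.mpr hQ
  have hd2 : (X - C (β:ℂ))^2 ∣ (gZ k).map (Int.castRingHom ℂ) := by
    rw [hpq, Polynomial.map_mul, sq]
    exact mul_dvd_mul hdP hdQ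
  have hdH : (X - C (β:ℂ))^2 ∣ ((X:ℂ[X])^(k+1) - 2*X + 1) := by
    have hid : ((X:ℂ[X]) - 1) * ((∑ i ∈ Finset.Icc 1 k, (X:ℂ[X]) ^ i) - 1)
        = (X:ℂ[X])^(k+1) - 2*X + 1 := ring_id k (X : ℂ[X])
    rw [← hid, ← gZ_map]
    exact Dvd.dvd.mul_left hd2 _
  obtain ⟨u, hu⟩ := hdH
  have hder : (((X:ℂ[X])^(k+1) - 2*X + 1).derivative).eval (β:ℂ) = 0 := by
    rw [hu]
    simp [derivative_mul, derivative_pow]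
  have hder2 : (((X:ℂ[X])^(k+1) - 2*X + 1).derivative).eval (β:ℂ)
      = (k+1 : ℂ) * (β:ℂ)^k - 2 := by
    simp [derivative_X_pow]
  rw [hder2] at hder
  have hreal : ((k+1 : ℝ) * β^k - 2 : ℝ) = 0 := by
    have : (((k+1 : ℝ) * β^k - 2 : ℝ) : ℂ) = 0 := by push_cast; linear_combination hder
    exact_mod_cast this
  have := beta_pow_bound k hk hβ1 hβ2
  linarith

lemma no_small_factor (k : ℕ) (hk : 2 ≤ k) {β : ℝ} (hβ1 : 1/2 < β) (hβ2 : β < 3/4)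
    (hβ : β ^ (k+1) = 2*β - 1) (q : ℤ[X]) (hq : q ∣ gZ k) (hdeg : q.natDegree ≠ 0)
    (habs : q.coeff 0 = 1 ∨ q.coeff 0 = -1)
    (hβq : (q.map (Int.castRingHom ℂ)).eval (β:ℂ) ≠ 0) : False := by
  set Q := q.map (Int.castRingHom ℂ) with hQdef
  have hqne : q ≠ 0 := by
    rintro rfl; simp at hdeg
  have hQne : Q ≠ 0 := by
    rw [hQdef, Polynomial.map_ne_zero_iff (by exact_mod_cast Int.cast_injective)]
    exact hqne
  have hQdeg : Q.natDegree = q.natDegree :=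
    natDegree_map_eq_of_injective (by exact_mod_cast Int.cast_injective) q
  have hsplit : Q.Splits := IsAlgClosed.splits Q
  have hcard : Q.roots.card = Q.natDegree := (splits_iff_card_roots).mp hsplit
  -- every root of Q has norm > 1
  have hroots : ∀ r ∈ Q.roots, 1 < ‖r‖ := by
    intro r hr
    have hr0 : Q.eval r = 0 := by
      exact (mem_roots hQne).mp hr
    have hrG : ((gZ k).map (Int.castRingHom ℂ)).eval r = 0 := by
      obtain ⟨c, hc⟩ := hq
      rw [hc, Polynomial.map_mul, eval_mul, ← hQdef, hr0, zero_mul]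
    obtain ⟨heq, hne1⟩ := root_eqn k hk r hrG
    by_contra hle
    push_neg at hle
    have := root_in_disk k hk hβ1 hβ2 hβ r heq hle hne1
    rw [this] at hr0
    exact hβq hr0
  -- product of roots
  have hlcq : q.leadingCoeff = 1 ∨ q.leadingCoeff = -1 := by
    obtain ⟨c, hc⟩ := hq
    have h1 : (gZ k).leadingCoeff = q.leadingCoeff * c.leadingCoeff := by
      rw [hc, leadingCoeff_mul]
    rw [(gZ_monic k (by omega)).leadingCoeff] at h1
    have : IsUnit q.leadingCoeff := IsUnit.of_mul_eq_one _ h1.symm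
    exact Int.isUnit_iff.mp this
  have hprod := hsplit.eq_prod_roots
  have heval0 : Q.eval 0 = Q.leadingCoeff * ((Q.roots.map fun a => -a).prod) := by
    conv_lhs => rw [hprod]
    rw [eval_mul, eval_C, eval_multiset_prod, Multiset.map_map]
    congr 2
    ext a
    simp
  have hnorm1 : ‖Q.eval 0‖ = 1 := by
    have h0 : Q.eval 0 = ((q.coeff 0 : ℤ) : ℂ) := by
      rw [← coeff_zero_eq_eval_zero, hQdef, coeff_map]
      simp
    rcases habs with h | h <;> rw [h0, h] <;> simp
  have hnormlc : ‖Q.leadingCoeff‖ = 1 := by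
    have : Q.leadingCoeff = ((q.leadingCoeff : ℤ) : ℂ) := by
      rw [hQdef, Polynomial.leadingCoeff_map_of_injective (by exact_mod_cast Int.cast_injective)]
      simp
    rcases hlcq with h | h <;> rw [this, h] <;> simp
  have hprodnorm : ((Q.roots.map fun a => -a).map fun z => ‖z‖).prod = 1 := by
    have := congrArg (fun z => ‖z‖) heval0
    simp only [norm_mul] at this
    rw [hnorm1, hnormlc, one_mul] at this
    have h2 := map_multiset_prod (normHom : ℂ →*₀ ℝ) (Multiset.map (fun a => -a) Q.roots)
    rw [this]
    exact h2.symm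
  have hmm : ((Q.roots.map fun a => -a).map fun z => ‖z‖) = Q.roots.map fun a => ‖a‖ := by
    rw [Multiset.map_map]
    congr 1
    ext a
    simp
  rw [hmm] at hprodnorm
  -- roots nonempty
  have hne : Q.roots ≠ 0 := by
    intro h
    rw [h] at hcard
    simp [hQdeg] at hcard
    exact hdeg hcard.symm
  obtain ⟨r₀, hr₀⟩ := Multiset.exists_mem_of_ne_zero hne
  have hsplit2 : Q.roots = r₀ ::ₘ (Q.roots.erase r₀) := (Multiset.cons_erase hr₀).symm
  rw [hsplit2, Multiset.map_cons, Multiset.prod_cons] at hprodnorm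
  have hrest : 1 ≤ ((Q.roots.erase r₀).map fun a => ‖a‖).prod := by
    apply Multiset.one_le_prod
    intro x hx
    obtain ⟨a, ha, rfl⟩ := Multiset.mem_map.mp hx
    exact le_of_lt (hroots a (Multiset.mem_of_mem_erase ha))
  have h1 := hroots r₀ hr₀
  nlinarith


theorem gZ_irreducible (k : ℕ) (hk : 2 ≤ k) : Irreducible (gZ k) := by
  obtain ⟨β, hβ1, hβ2, hβ⟩ := beta_exists k hk
  constructor
  · intro hu
    have := natDegree_eq_zero_of_isUnit hu
    rw [gZ_natDegree k (by omega)] at this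
    omega
  · intro p q hpq
    by_contra hcon
    push_neg at hcon
    obtain ⟨hp, hq⟩ := hcon
    have hmon := gZ_monic k (by omega)
    have hlc : p.leadingCoeff * q.leadingCoeff = 1 := by
      have h := hmon
      rw [Monic.def, hpq, leadingCoeff_mul] at h
      exact h
    have hpd : p.natDegree ≠ 0 := by
      intro h
      obtain ⟨a, rfl⟩ : ∃ a, p = C a := ⟨p.coeff 0, eq_C_of_natDegree_eq_zero h⟩
      exact hp (isUnit_C.mpr (IsUnit.of_mul_eq_one _ (by simpa only [leadingCoeff_C] using hlc)))
    have hqd : q.natDegree ≠ 0 := by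
      intro h
      obtain ⟨a, rfl⟩ : ∃ a, q = C a := ⟨q.coeff 0, eq_C_of_natDegree_eq_zero h⟩
      refine hq (isUnit_C.mpr (IsUnit.of_mul_eq_one p.leadingCoeff ?_))
      rw [mul_comm]
      simpa only [leadingCoeff_C] using hlc
    have hc0 : p.coeff 0 * q.coeff 0 = -1 := by
      rw [← mul_coeff_zero, ← hpq, gZ_coeff_zero k (by omega)]
    have hpc : p.coeff 0 = 1 ∨ p.coeff 0 = -1 :=
      Int.isUnit_iff.mp (IsUnit.of_mul_eq_one (-q.coeff 0) (by linarith [hc0] <;> ring_nf))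
    have hqc : q.coeff 0 = 1 ∨ q.coeff 0 = -1 :=
      Int.isUnit_iff.mp (IsUnit.of_mul_eq_one (-p.coeff 0) (by linarith [hc0] <;> ring_nf))
    -- β is a root of gZ over ℂ
    have hβC : ((gZ k).map (Int.castRingHom ℂ)).eval (β:ℂ) = 0 := by
      rw [gZ_eval_C]
      have hid := ring_id k ((β:ℂ))
      have hrhs : ((β:ℂ)) ^ (k+1) - 2*(β:ℂ) + 1 = 0 := by
        have : (((β ^ (k+1) - (2*β - 1)) : ℝ) : ℂ) = 0 := by rw [hβ]; simp
        push_cast at this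
        linear_combination this
      rw [hrhs] at hid
      have hne : ((β:ℂ)) - 1 ≠ 0 := by
        intro h
        have : (β:ℂ) = 1 := by linear_combination h
        have : β = 1 := by exact_mod_cast this
        linarith
      rcases mul_eq_zero.mp hid with h | h
      · exact absurd h hne
      · exact h
    have hPQ : (p.map (Int.castRingHom ℂ)).eval (β:ℂ)
        * (q.map (Int.castRingHom ℂ)).eval (β:ℂ) = 0 := by
      rw [← eval_mul, ← Polynomial.map_mul, ← hpq]
      exact hβC
    rcases mul_eq_zero.mp hPQ with h | h
    · have hQne : (q.map (Int.castRingHom ℂ)).eval (β:ℂ) ≠ 0 := by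
        intro h2
        exact not_both k hk hβ1 hβ2 hβ p q hpq h h2
      exact no_small_factor k hk hβ1 hβ2 hβ q ⟨p, by rw [hpq, mul_comm]⟩ hqd hqc hQne
    · have hPne : (p.map (Int.castRingHom ℂ)).eval (β:ℂ) ≠ 0 := by
        intro h2
        exact not_both k hk hβ1 hβ2 hβ p q hpq h2 h
      exact no_small_factor k hk hβ1 hβ2 hβ p ⟨q, hpq⟩ hpd hpc hPne

theorem gk_irreducible (k : ℕ) (hk : 2 ≤ k) :
    Irreducible (∑ i ∈ Finset.Icc 1 k, (X : ℚ[X]) ^ i - 1) := by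
  have h := (IsPrimitive.Int.irreducible_iff_irreducible_map_cast
    (gZ_monic k (by omega)).isPrimitive).mp (gZ_irreducible k hk)
  have hmap : (gZ k).map (Int.castRingHom ℚ) = ∑ i ∈ Finset.Icc 1 k, (X : ℚ[X]) ^ i - 1 :=
    gZ_map k
  rwa [hmap] at h
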